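/- For every n ≥ 1, the dimension of the degree-n component R_n of the degree ℕ-grading of the Lie superalgebra R (char K ≠ 2), equivalently dim R^n/R^{n+1} for the lower central series, lies in {2, 3, 4}; i.e., counting standard monomials w (encoded as above) with deg(w) = X₁ + X₂ = n, where (X₁,X₂) = ((Z₁+2Z₂)/3, (Z₁-Z₂)/3) and (Z₁,Z₂) = (wt(w), swt(w)), the count is always 2, 3, or 4. -/

import Mathlib

open Finset

def jac : ℕ → ℕ
  | 0 => 0
  | 1 => 1
  | n + 2 => jac (n + 1) + 2 * jac n

@[simp] lemma jac_zero : jac 0 = 0 := rfl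
@[simp] lemma jac_one : jac 1 = 1 := rfl
@[simp] lemma jac_two : jac 2 = 1 := rfl
@[simp] lemma jac_three : jac 3 = 3 := rfl
lemma jac_add_two (n : ℕ) : jac (n + 2) = jac (n + 1) + 2 * jac n := rfl

lemma jac_succ_pos : ∀ n, 0 < jac (n + 1)
  | 0 => one_pos
  | n + 1 => by
    rw [jac_add_two]
    exact Nat.lt_of_lt_of_le (jac_succ_pos n) (Nat.le_add_right _ _)

lemma jac_le_succ : ∀ n, jac n ≤ jac (n + 1)
  | 0 => by simp
  | n + 1 => by rw [jac_add_two]; omega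

lemma jac_lt_succ (n : ℕ) (h : 2 ≤ n) : jac n < jac (n + 1) := by
  obtain ⟨m, rfl⟩ : ∃ m, n = m + 2 := ⟨n - 2, by omega⟩
  have h3 : jac (m + 2 + 1) = jac (m + 2) + 2 * jac (m + 1) := jac_add_two (m + 1)
  have := jac_succ_pos m
  omega

lemma jac_mono {a b : ℕ} (h : a ≤ b) : jac a ≤ jac b := by
  induction b with
  | zero => simp [Nat.le_zero.mp h]
  | succ b ih =>
    rcases Nat.lt_or_ge a (b + 1) with h' | h'
    · exact le_trans (ih (by omega)) (jac_le_succ b)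
    · have : a = b + 1 := by omega
      simp [this]

lemma jac_strict_mono {a b : ℕ} (h2 : 2 ≤ a) (h : a < b) : jac a < jac b :=
  lt_of_lt_of_le (jac_lt_succ a h2) (jac_mono h)

lemma jac_parity : ∀ n, (n % 2 = 0 → jac (n + 1) = 2 * jac n + 1) ∧
    (n % 2 = 1 → jac (n + 1) + 1 = 2 * jac n)
  | 0 => by simp
  | n + 1 => by
    obtain ⟨h1, h2⟩ := jac_parity n
    rw [jac_add_two]
    constructor
    · intro he
      have := h2 (by omega)
      omega
    · intro ho
      have := h1 (by omega)
      omega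

lemma jac_even {n : ℕ} (h : Even n) : jac (n + 1) = 2 * jac n + 1 :=
  (jac_parity n).1 (Nat.even_iff.mp h)
lemma jac_odd {n : ℕ} (h : Odd n) : jac (n + 1) + 1 = 2 * jac n :=
  (jac_parity n).2 (Nat.odd_iff.mp h)

lemma jac_cast : ∀ n, 3 * (jac n : ℚ) = 2 ^ n - (-1) ^ n := by
  intro n
  induction n using Nat.twoStepInduction with
  | zero => simp
  | one => norm_num
  | more n ih1 ih2 =>
    rw [jac_add_two]
    push_cast
    ring_nf
    ring_nf at ih1 ih2
    linear_combination 2 * ih1 + ih2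

def sg (S : Finset ℕ) : ℕ := ∑ i ∈ S, jac (i + 1)
def Tm (m : ℕ) : ℕ := sg (range m)

@[simp] lemma sg_empty : sg ∅ = 0 := rfl
@[simp] lemma Tm_zero : Tm 0 = 0 := rfl
lemma Tm_succ (m : ℕ) : Tm (m + 1) = Tm m + jac (m + 1) := sum_range_succ _ _

lemma two_Tm (m : ℕ) : 2 * Tm m + 1 = jac (m + 2) := by
  induction m with
  | zero => simp [Tm]
  | succ m ih =>
    have h : jac (m + 1 + 2) = jac (m + 2) + 2 * jac (m + 1) := jac_add_two (m + 1)
    rw [Tm_succ]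
    omega

lemma jac_succ_bounds (m : ℕ) : jac (m + 1) ≤ 2 * jac m + 1 ∧ 2 * jac m ≤ jac (m + 1) + 1 := by
  rcases Nat.even_or_odd m with h | h
  · have := jac_even h; omega
  · have := jac_odd h; omega

lemma Tm_le (m : ℕ) : Tm m ≤ jac (m + 1) := by
  have h1 := two_Tm m
  have h2 : jac (m + 2) ≤ 2 * jac (m + 1) + 1 := (jac_succ_bounds (m + 1)).1
  omega

lemma jac_le_Tm (m : ℕ) : jac (m + 1) ≤ Tm m + 1 := by
  have h1 := two_Tm m
  have h2 : 2 * jac (m + 1) ≤ jac (m + 2) + 1 := (jac_succ_bounds (m + 1)).2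
  omega

lemma Tm_even {m : ℕ} (h : Even m) : Tm m + 1 = jac (m + 1) := by
  have h1 := two_Tm m
  have h2 : jac (m + 2) + 1 = 2 * jac (m + 1) := jac_odd (by simpa using h.add_one)
  omega

lemma Tm_odd {m : ℕ} (h : Odd m) : Tm m = jac (m + 1) := by
  have h1 := two_Tm m
  have h2 : jac (m + 2) = 2 * jac (m + 1) + 1 := jac_even (by simpa using h.add_one)
  omega

lemma sg_le {S : Finset ℕ} {m : ℕ} (h : S ⊆ range m) : sg S ≤ Tm m :=
  sum_le_sum_of_subset h

lemma sg_eq_zero_iff {S : Finset ℕ} : sg S = 0 ↔ S = ∅ := by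
  constructor
  · intro h
    by_contra hne
    obtain ⟨i, hi⟩ := Finset.nonempty_iff_ne_empty.mpr hne
    have h1 : 0 < jac (i + 1) := jac_succ_pos i
    have h2 : jac (i + 1) ≤ ∑ j ∈ S, jac (j + 1) :=
      single_le_sum (f := fun j => jac (j + 1)) (fun j _ => Nat.zero_le _) hi
    unfold sg at h
    omega
  · rintro rfl; rfl

lemma sg_sdiff {S : Finset ℕ} {m : ℕ} (h : S ⊆ range m) :
    sg (range m \ S) + sg S = Tm m := by
  unfold sg Tm sg
  exact sum_sdiff h

lemma sg_eq_Tm {S : Finset ℕ} {m : ℕ} (h : S ⊆ range m) (he : sg S = Tm m) :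
    S = range m := by
  have hs := sg_sdiff h
  have h0 : range m \ S = ∅ := sg_eq_zero_iff.mp (by omega)
  have hsub : range m ⊆ S := fun i hi => by
    by_contra hx
    have : i ∈ range m \ S := mem_sdiff.mpr ⟨hi, hx⟩
    simp [h0] at this
  exact Subset.antisymm h hsub

lemma sg_insert {S : Finset ℕ} {m : ℕ} (h : m ∉ S) :
    sg (insert m S) = jac (m + 1) + sg S := sum_insert h

lemma sg_exists : ∀ m s, s ≤ Tm m → ∃ S, S ⊆ range m ∧ sg S = s := by
  intro m
  induction m with
  | zero =>
    intro s hs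
    exact ⟨∅, by simp, by simpa using (Nat.le_zero.mp (by simpa using hs)).symm⟩
  | succ m ih =>
    intro s hs
    rw [Tm_succ] at hs
    rcases le_or_gt s (Tm m) with h | h
    · obtain ⟨S, hS1, hS2⟩ := ih s h
      exact ⟨S, hS1.trans (range_subset_range.mpr (Nat.le_succ m)), hS2⟩
    · have hjle : jac (m + 1) ≤ s := by
        have := jac_le_Tm m
        omega
      obtain ⟨S, hS1, hS2⟩ := ih (s - jac (m + 1)) (by omega)
      have hmS : m ∉ S := fun hx => by simpa using hS1 hx
      refine ⟨insert m S, ?_, ?_⟩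
      · rw [range_add_one]; exact insert_subset_insert _ hS1
      · rw [sg_insert hmS, hS2]; omega

def Nc (m s : ℕ) : ℕ := ((range m).powerset.filter fun S => sg S = s).card

lemma Nc_pos {m s : ℕ} (h : s ≤ Tm m) : 1 ≤ Nc m s := by
  obtain ⟨S, h1, h2⟩ := sg_exists m s h
  refine Nat.one_le_iff_ne_zero.mpr (Finset.card_ne_zero_of_mem (a := S) ?_)
  simp [mem_filter, mem_powerset, h1, h2]

lemma filter_sg_zero (m : ℕ) :
    ((range m).powerset.filter fun S => sg S = 0) = {∅} := by
  ext S
  simp only [mem_filter, mem_powerset, mem_singleton, sg_eq_zero_iff]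
  constructor
  · exact fun h => h.2
  · rintro rfl; simp

lemma filter_sg_Tm (m : ℕ) :
    ((range m).powerset.filter fun S => sg S = Tm m) = {range m} := by
  ext S
  simp only [mem_filter, mem_powerset, mem_singleton]
  constructor
  · rintro ⟨h1, h2⟩; exact sg_eq_Tm h1 h2
  · rintro rfl; exact ⟨Subset.rfl, rfl⟩

lemma Nc_zero_right (m : ℕ) : Nc m 0 = 1 := by
  rw [Nc, filter_sg_zero]; simp

lemma Nc_Tm (m : ℕ) : Nc m (Tm m) = 1 := by
  rw [Nc, filter_sg_Tm]; simp

lemma Nc_eq_zero {m s : ℕ} (h : Tm m < s) : Nc m s = 0 := by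
  rw [Nc, Finset.card_eq_zero, Finset.filter_eq_empty_iff]
  intro S hS
  have := sg_le (mem_powerset.mp hS)
  omega

lemma Nc_le_two : ∀ m s, Nc m s ≤ 2 := by
  intro m
  induction m with
  | zero =>
    intro s
    have h := card_filter_le ((range 0).powerset) (fun S => sg S = s)
    exact h.trans (by simp)
  | succ m ih =>
    intro s
    have hdecomp : Nc (m + 1) s ≤ Nc m s +
        ((range m).powerset.filter fun S => sg (insert m S) = s).card := by
      rw [Nc, range_add_one, powerset_insert, filter_union]
      refine (card_union_le _ _).trans ?_
      refine Nat.add_le_add le_rfl ?_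
      rw [Finset.filter_image]
      exact card_image_le
    have hins : ((range m).powerset.filter fun S => sg (insert m S) = s) =
        ((range m).powerset.filter fun S => jac (m + 1) + sg S = s) := by
      apply filter_congr
      intro S hS
      have hmS : m ∉ S := fun hx => by simpa using (mem_powerset.mp hS) hx
      rw [sg_insert hmS]
    rw [hins] at hdecomp
    rcases Nat.lt_or_ge s (jac (m + 1)) with h1 | h1
    · have he : ((range m).powerset.filter fun S => jac (m + 1) + sg S = s) = ∅ := by
        rw [Finset.filter_eq_empty_iff]; intro S _; omega
      rw [he] at hdecomp
      simpa using hdecomp.trans (by simpa using ih s)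
    · have heq : ((range m).powerset.filter fun S => jac (m + 1) + sg S = s) =
          ((range m).powerset.filter fun S => sg S = s - jac (m + 1)) := by
        apply filter_congr; intro S _
        constructor <;> intro <;> omega
      rw [heq] at hdecomp
      rcases Nat.lt_or_ge (Tm m) s with h2 | h2
      · rw [Nc_eq_zero h2] at hdecomp
        refine hdecomp.trans ?_
        rw [Nat.zero_add]
        exact ih (s - jac (m + 1))
      · have hs1 : s = Tm m := by
          have := Tm_le m
          omega
        have e1 : Nc m s = 1 := by rw [hs1]; exact Nc_Tm m
        have hd2 : Nc (m + 1) s ≤ Nc m s + Nc m (s - jac (m + 1)) := hdecomp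
        have e2 : Nc m (s - jac (m + 1)) = 1 := by
          rw [show s - jac (m + 1) = 0 by have := Tm_le m; omega]
          exact Nc_zero_right m
        omega

/-- A standard monomial is encoded by its length `l`, tail `S`, and type `t`
(`t = false`: first type, `S ⊆ {0,…,l-2}`; `t = true`: second type, `l ≥ 2`,
`S ⊆ {0,…,l-3}`, excluding the false monomial `x₀x₂v₃`). -/
def isStdMon (l : ℕ) (S : Finset ℕ) (t : Bool) : Prop :=
  if t then 2 ≤ l ∧ S ⊆ Finset.range (l - 2) ∧ ¬(l = 3 ∧ S = {0})
  else S ⊆ Finset.range (l - 1)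

/-- Weight `Z₁` of a standard monomial. -/
def stdWt (l : ℕ) (S : Finset ℕ) (t : Bool) : ℚ :=
  (if t then 2 ^ (l - 1) else 2 ^ l) - ∑ i ∈ S, (2 : ℚ) ^ i

/-- Superweight `Z₂` of a standard monomial. -/
def stdSwt (l : ℕ) (S : Finset ℕ) (t : Bool) : ℚ :=
  (if t then 2 * (-1) ^ l else (-1) ^ l) - ∑ i ∈ S, (-1 : ℚ) ^ i

/-- Degree `X₁ + X₂ = (2Z₁ + Z₂)/3` of a standard monomial. -/
def stdDeg (l : ℕ) (S : Finset ℕ) (t : Bool) : ℚ :=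
  (2 * stdWt l S t + stdSwt l S t) / 3


lemma key3 (i : ℕ) : 3 * (jac (i + 1) : ℚ) = 2 * 2 ^ i + (-1) ^ i := by
  rw [jac_cast, pow_succ, pow_succ]
  ring

lemma sg_cast (S : Finset ℕ) :
    3 * (sg S : ℚ) = 2 * ∑ i ∈ S, (2 : ℚ) ^ i + ∑ i ∈ S, (-1 : ℚ) ^ i := by
  unfold sg
  push_cast
  rw [Finset.mul_sum]
  rw [show (2 * ∑ i ∈ S, (2 : ℚ) ^ i + ∑ i ∈ S, (-1 : ℚ) ^ i)
      = ∑ i ∈ S, (2 * (2:ℚ) ^ i + (-1) ^ i) by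
    rw [Finset.sum_add_distrib, Finset.mul_sum]]
  exact Finset.sum_congr rfl fun i _ => key3 i

lemma stdDeg_false (l : ℕ) (S : Finset ℕ) :
    stdDeg l S false = (jac (l + 1) : ℚ) - (sg S : ℚ) := by
  have hl := key3 l
  have hs := sg_cast S
  unfold stdDeg stdWt stdSwt
  simp only [Bool.false_eq_true, if_false]
  field_simp
  linarith

lemma stdDeg_true (l : ℕ) (S : Finset ℕ) (hl : 1 ≤ l) :
    stdDeg l S true = (jac l : ℚ) + (-1) ^ l - (sg S : ℚ) := by
  obtain ⟨k, rfl⟩ : ∃ k, l = k + 1 := ⟨l - 1, by omega⟩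
  have hc := jac_cast (k + 1)
  have hs := sg_cast S
  unfold stdDeg stdWt stdSwt
  simp only [if_true, Nat.add_sub_cancel]
  have hp : ((-1 : ℚ)) ^ (k + 1) = -(-1) ^ k := by rw [pow_succ]; ring
  have h2 : ((2 : ℚ)) ^ (k + 1) = 2 * 2 ^ k := by rw [pow_succ]; ring
  rw [hp] at hc ⊢
  rw [h2] at hc
  field_simp
  linarith

lemma deg_false_iff {n l : ℕ} {S : Finset ℕ} :
    (stdDeg l S false = (n : ℚ)) ↔ sg S + n = jac (l + 1) := by
  rw [stdDeg_false, sub_eq_iff_eq_add]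
  constructor
  · intro h
    have : ((jac (l + 1) : ℕ) : ℚ) = ((sg S + n : ℕ) : ℚ) := by push_cast; linarith
    exact (Nat.cast_inj.mp this).symm
  · intro h
    have : ((sg S + n : ℕ) : ℚ) = ((jac (l + 1) : ℕ) : ℚ) := by exact_mod_cast h
    push_cast at this
    linarith

lemma deg_true_iff {n l : ℕ} {S : Finset ℕ} (hl : 1 ≤ l) :
    (stdDeg l S true = (n : ℚ)) ↔
      ((Even l ∧ sg S + n = jac l + 1) ∨ (Odd l ∧ sg S + n + 1 = jac l)) := by
  rw [stdDeg_true l S hl]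
  rcases Nat.even_or_odd l with he | ho
  · rw [he.neg_one_pow]
    constructor
    · intro h
      refine Or.inl ⟨he, ?_⟩
      have : ((sg S + n : ℕ) : ℚ) = ((jac l + 1 : ℕ) : ℚ) := by push_cast; linarith
      exact Nat.cast_inj.mp this
    · rintro (⟨-, h⟩ | ⟨ho, -⟩)
      · have : ((sg S + n : ℕ) : ℚ) = ((jac l + 1 : ℕ) : ℚ) := by exact_mod_cast h
        push_cast at this
        linarith
      · exact absurd he (Nat.not_even_iff_odd.mpr ho)
  · rw [ho.neg_one_pow]
    constructor
    · intro h
      refine Or.inr ⟨ho, ?_⟩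
      have : ((sg S + n + 1 : ℕ) : ℚ) = ((jac l : ℕ) : ℚ) := by push_cast; linarith
      exact Nat.cast_inj.mp this
    · rintro (⟨he, -⟩ | ⟨-, h⟩)
      · exact absurd he (Nat.not_even_iff_odd.mpr ho)
      · have : ((sg S + n + 1 : ℕ) : ℚ) = ((jac l : ℕ) : ℚ) := by exact_mod_cast h
        push_cast at this
        linarith

def solSet (n : ℕ) : Set (ℕ × Finset ℕ × Bool) :=
  {e | isStdMon e.1 e.2.1 e.2.2 ∧ stdDeg e.1 e.2.1 e.2.2 = n}

lemma mem_solSet_false {n l : ℕ} {S : Finset ℕ} :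
    (l, S, false) ∈ solSet n ↔ (S ⊆ range (l - 1) ∧ sg S + n = jac (l + 1)) := by
  unfold solSet isStdMon
  simp only [Set.mem_setOf_eq, Bool.false_eq_true, if_false]
  rw [deg_false_iff]

lemma mem_solSet_true {n l : ℕ} {S : Finset ℕ} :
    (l, S, true) ∈ solSet n ↔
      (2 ≤ l ∧ S ⊆ range (l - 2) ∧ ¬(l = 3 ∧ S = {0}) ∧
        ((Even l ∧ sg S + n = jac l + 1) ∨ (Odd l ∧ sg S + n + 1 = jac l))) := by
  unfold solSet isStdMon
  simp only [Set.mem_setOf_eq, if_true]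
  constructor
  · rintro ⟨⟨h1, h2, h3⟩, h4⟩
    exact ⟨h1, h2, h3, (deg_true_iff (by omega)).mp h4⟩
  · rintro ⟨h1, h2, h3, h4⟩
    exact ⟨⟨h1, h2, h3⟩, (deg_true_iff (by omega)).mpr h4⟩
section PIN
variable {l n l' : ℕ} {S : Finset ℕ}

lemma jac_pos' (h : 1 ≤ l) : 1 ≤ jac l := by
  obtain ⟨k, rfl⟩ : ∃ k, l = k + 1 := ⟨l - 1, by omega⟩
  exact jac_succ_pos k

lemma Tm_le' (h : 1 ≤ l') : Tm (l' - 1) ≤ jac l' := by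
  have := Tm_le (l' - 1)
  rwa [show l' - 1 + 1 = l' by omega] at this

lemma two_Tm' (h : 1 ≤ l') : 2 * Tm (l' - 1) + 1 = jac (l' + 1) := by
  have := two_Tm (l' - 1)
  rwa [show l' - 1 + 2 = l' + 1 by omega] at this

lemma pinF (hl2 : 2 ≤ l) (h1 : jac l < n) (h2 : n ≤ jac (l + 1))
    (hS : S ⊆ Finset.range (l' - 1)) (he : sg S + n = jac (l' + 1)) :
    l' = l ∨ (l' = l + 1 ∧ Even l ∧ n = jac (l + 1) ∧ S = Finset.range l) := by
  have hn2 : 2 ≤ n := by have := jac_pos' (by omega : 1 ≤ l); omega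
  have hl'2 : 2 ≤ l' := by
    by_contra h
    have h1' : jac (l' + 1) = 1 := by interval_cases l' <;> rfl
    omega
  have hsgle : sg S ≤ Tm (l' - 1) := sg_le hS
  have htle : Tm (l' - 1) ≤ jac l' := Tm_le' (by omega)
  have h2T : 2 * Tm (l' - 1) + 1 = jac (l' + 1) := two_Tm' (by omega)
  -- jac (l'+1) ≤ 2n - 1
  have hub : jac (l' + 1) ≤ 2 * n - 1 := by omega
  have hlb : n ≤ jac (l' + 1) := by omega
  -- exclude l' < l
  have hge : l ≤ l' := by
    by_contra h
    push_neg at h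
    have : jac (l' + 1) ≤ jac l := jac_mono (by omega)
    omega
  -- exclude l' ≥ l + 2
  have hle : l' ≤ l + 1 := by
    by_contra h
    push_neg at h
    have e1 : jac (l + 3) ≤ jac (l' + 1) := jac_mono (by omega)
    have e2 : jac (l + 3) = jac (l + 2) + 2 * jac (l + 1) := jac_add_two (l + 1)
    have e3 : jac (l + 2) = jac (l + 1) + 2 * jac l := jac_add_two l
    omega
  rcases Nat.eq_or_lt_of_le hge with heq | hlt
  · exact Or.inl heq.symm
  · have hl1 : l' = l + 1 := by omega
    subst hl1
    rw [show l + 1 - 1 = l by omega] at hsgle htle h2T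
    have e3 : jac (l + 2) = jac (l + 1) + 2 * jac l := jac_add_two l
    have hrange : Finset.range (l + 1 - 1) = Finset.range l := by norm_num
    rw [hrange] at hS
    rcases Nat.even_or_odd l with hev | hod
    · have hTm : Tm l + 1 = jac (l + 1) := Tm_even hev
      have hj : jac (l + 1) = 2 * jac l + 1 := jac_even hev
      have hsgle' : sg S ≤ Tm l := sg_le hS
      have hsgTm : sg S = Tm l := by omega
      have hfull : S = Finset.range l := sg_eq_Tm hS hsgTm
      exact Or.inr ⟨rfl, hev, by omega, hfull⟩
    · have hTm : Tm l = jac (l + 1) := Tm_odd hod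
      have hj : jac (l + 1) + 1 = 2 * jac l := jac_odd hod
      have hsgle' : sg S ≤ Tm l := sg_le hS
      omega

lemma pinT (hl2 : 2 ≤ l) (h1 : jac l < n) (h2 : n ≤ jac (l + 1))
    (hl'2 : 2 ≤ l') (hS : S ⊆ Finset.range (l' - 2))
    (he : (Even l' ∧ sg S + n = jac l' + 1) ∨ (Odd l' ∧ sg S + n + 1 = jac l')) :
    (l' = l ∧ Even l ∧ n = jac l + 1 ∧ S = ∅)
    ∨ (l' = l + 1 ∧ Even l ∧ n < jac (l + 1) ∧ sg S + n + 1 = jac (l + 1))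
    ∨ (l' = l + 1 ∧ Odd l ∧ sg S + n = jac (l + 1) + 1)
    ∨ (l' = l + 2 ∧ Odd l ∧ n = jac (l + 1) ∧ S = Finset.range l) := by
  have hn2 : 2 ≤ n := by have := jac_pos' (by omega : 1 ≤ l); omega
  have hsgle : sg S ≤ Tm (l' - 2) := sg_le hS
  have htle : Tm (l' - 2) ≤ jac (l' - 1) := by
    have := Tm_le (l' - 2)
    rwa [show l' - 2 + 1 = l' - 1 by omega] at this
  have h2T : 2 * Tm (l' - 2) + 1 = jac l' := by
    have := two_Tm (l' - 2)
    rwa [show l' - 2 + 2 = l' by omega] at this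
  -- bounds on jac l'
  have hub : jac l' ≤ 2 * n + 1 := by rcases he with ⟨-, h⟩ | ⟨-, h⟩ <;> omega
  have hlb : n ≤ jac l' + 1 := by rcases he with ⟨-, h⟩ | ⟨-, h⟩ <;> omega
  have hlb2 : n - 1 ≤ jac l' := by omega
  -- l ≤ l'
  have hge : l ≤ l' := by
    by_contra h
    push_neg at h
    have hj : jac l' ≤ jac (l - 1) := jac_mono (by omega)
    have hj2 : jac (l - 1) < jac l := by
      rcases Nat.eq_or_lt_of_le hl2 with heq | hlt
      · -- l = 2 : l' < 2 contradicts hl'2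
        omega
      · exact jac_strict_mono (by omega) (by omega)
    omega
  -- l' ≤ l + 2
  have hle : l' ≤ l + 2 := by
    by_contra h
    push_neg at h
    have e1 : jac (l + 3) ≤ jac l' := jac_mono (by omega)
    have e2 : jac (l + 3) = jac (l + 2) + 2 * jac (l + 1) := jac_add_two (l + 1)
    have e3 : jac (l + 2) = jac (l + 1) + 2 * jac l := jac_add_two l
    omega
  have e3 : jac (l + 2) = jac (l + 1) + 2 * jac l := jac_add_two l
  -- case split on l'
  rcases (by omega : l' = l ∨ l' = l + 1 ∨ l' = l + 2) with rfl | hl1 | hl1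
  · -- l' = l
    rcases he with ⟨hev, h⟩ | ⟨hod, h⟩
    · have hsg0 : sg S = 0 := by omega
      exact Or.inl ⟨rfl, hev, by omega, sg_eq_zero_iff.mp hsg0⟩
    · omega
  · subst hl1
    rcases he with ⟨hev, h⟩ | ⟨hod, h⟩
    · -- Even (l+1) → Odd l
      have hodl : Odd l := by
        rcases Nat.even_or_odd l with h' | h'
        · exact absurd hev (by simp [Nat.even_add_one, Nat.not_even_iff_odd]; exact h')
        · exact h'
      exact Or.inr (Or.inr (Or.inl ⟨rfl, hodl, by
        have hj : jac (l + 1) + 1 = 2 * jac l := jac_odd hodl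
        omega⟩))
    · -- Odd (l+1) → Even l
      have hevl : Even l := by
        rcases Nat.even_or_odd l with h' | h'
        · exact h'
        · exact absurd hod (by simp [Nat.odd_add_one, Nat.not_odd_iff_even]; exact h')
      exact Or.inr (Or.inl ⟨rfl, hevl, by omega, by omega⟩)
  · subst hl1
    rw [show l + 2 - 2 = l by omega] at hsgle htle h2T
    have hrange : Finset.range (l + 2 - 2) = Finset.range l := by norm_num
    rw [hrange] at hS
    have hsgle' : sg S ≤ Tm l := sg_le hS
    rcases Nat.even_or_odd l with hev | hod
    · -- Even l → Even (l+2): first disjunct of he applies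
      rcases he with ⟨-, h⟩ | ⟨hod2, -⟩
      · have hTm : Tm l + 1 = jac (l + 1) := Tm_even hev
        have hj : jac (l + 1) = 2 * jac l + 1 := jac_even hev
        omega
      · exact absurd hod2 (by
          simp [Nat.odd_iff, Nat.even_iff] at *
          omega)
    · -- Odd l → Odd (l+2)
      rcases he with ⟨hev2, -⟩ | ⟨-, h⟩
      · exact absurd hev2 (by
          simp [Nat.odd_iff, Nat.even_iff] at *
          omega)
      · have hTm : Tm l = jac (l + 1) := Tm_odd hod
        have hj : jac (l + 1) + 1 = 2 * jac l := jac_odd hod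
        have hsgTm : sg S = Tm l := by omega
        have hfull : S = Finset.range l := sg_eq_Tm hS hsgTm
        exact Or.inr (Or.inr (Or.inr ⟨rfl, hod, by omega, hfull⟩))

end PIN
def FF (l₀ s : ℕ) : Finset (ℕ × Finset ℕ × Bool) :=
  ((Finset.range (l₀ - 1)).powerset.filter fun S => sg S = s).image fun S => (l₀, S, false)

def FT (l₀ s : ℕ) : Finset (ℕ × Finset ℕ × Bool) :=
  ((Finset.range (l₀ - 2)).powerset.filter fun S => sg S = s).image fun S => (l₀, S, true)

lemma mem_FF {l₀ s l' : ℕ} {S : Finset ℕ} {t : Bool} :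
    (l', S, t) ∈ FF l₀ s ↔ l' = l₀ ∧ t = false ∧ S ⊆ Finset.range (l₀ - 1) ∧ sg S = s := by
  simp only [FF, mem_image, mem_filter, mem_powerset, Prod.mk.injEq]
  constructor
  · rintro ⟨S', ⟨h1, h2⟩, h3, h4, h5⟩
    subst h4
    exact ⟨h3.symm, h5.symm, h1, h2⟩
  · rintro ⟨rfl, rfl, h1, h2⟩
    exact ⟨S, ⟨h1, h2⟩, rfl, rfl, rfl⟩

lemma mem_FT {l₀ s l' : ℕ} {S : Finset ℕ} {t : Bool} :
    (l', S, t) ∈ FT l₀ s ↔ l' = l₀ ∧ t = true ∧ S ⊆ Finset.range (l₀ - 2) ∧ sg S = s := by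
  simp only [FT, mem_image, mem_filter, mem_powerset, Prod.mk.injEq]
  constructor
  · rintro ⟨S', ⟨h1, h2⟩, h3, h4, h5⟩
    subst h4
    exact ⟨h3.symm, h5.symm, h1, h2⟩
  · rintro ⟨rfl, rfl, h1, h2⟩
    exact ⟨S, ⟨h1, h2⟩, rfl, rfl, rfl⟩

lemma card_FF (l₀ s : ℕ) : (FF l₀ s).card = Nc (l₀ - 1) s :=
  Finset.card_image_of_injective _ (fun a b h => by simpa using h)

lemma card_FT (l₀ s : ℕ) : (FT l₀ s).card = Nc (l₀ - 2) s :=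
  Finset.card_image_of_injective _ (fun a b h => by simpa using h)

lemma disj_FF_FT {a b c d : ℕ} : Disjoint (FF a b) (FT c d) := by
  rw [Finset.disjoint_left]
  rintro ⟨l', S, t⟩ h1 h2
  rw [mem_FF] at h1
  rw [mem_FT] at h2
  rcases h1 with ⟨-, rfl, -⟩
  rcases h2 with ⟨-, h, -⟩
  exact Bool.false_ne_true h

lemma mem_range_mem : True := trivial

section CASES
variable {l n : ℕ}

lemma odd_not_even {m : ℕ} (h : Odd m) : ¬ Even m := Nat.not_even_iff_odd.mpr h

/-- Case (e): `l` odd, `jac l < n < jac (l+1)`. -/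
lemma case_e (hl2 : 2 ≤ l) (hod : Odd l) (h1 : jac l < n) (h2 : n < jac (l + 1)) :
    solSet n = ↑(FF l (jac (l + 1) - n) ∪ FT (l + 1) (jac (l + 1) + 1 - n)) := by
  ext ⟨l', S, t⟩
  rw [Finset.coe_union, Set.mem_union, Finset.mem_coe, Finset.mem_coe, mem_FF, mem_FT]
  cases t
  · rw [mem_solSet_false]
    constructor
    · rintro ⟨hS, he⟩
      rcases pinF hl2 h1 (le_of_lt h2) hS he with rfl | ⟨rfl, hev, -, -⟩
      · exact Or.inl ⟨rfl, rfl, hS, by omega⟩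
      · exact absurd hev (odd_not_even hod)
    · rintro (⟨rfl, -, hS, hsg⟩ | ⟨-, ht, -⟩)
      · exact ⟨hS, by omega⟩
      · exact absurd ht (by simp)
  · rw [mem_solSet_true]
    constructor
    · rintro ⟨hl'2, hS, hex, he⟩
      rcases pinT hl2 h1 (le_of_lt h2) hl'2 hS he with
        ⟨-, hev, -, -⟩ | ⟨-, hev, -, -⟩ | ⟨rfl, -, hsg⟩ | ⟨-, -, hn, -⟩
      · exact absurd hev (odd_not_even hod)
      · exact absurd hev (odd_not_even hod)
      · exact Or.inr ⟨rfl, rfl, hS, by omega⟩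
      · omega
    · rintro (⟨-, ht, -⟩ | ⟨rfl, -, hS, hsg⟩)
      · exact absurd ht (by simp)
      · refine ⟨by omega, hS, ?_, Or.inl ⟨hod.add_one, by omega⟩⟩
        rintro ⟨hl3, rfl⟩
        have := Nat.odd_iff.mp hod
        omega

lemma ncard_case_e (hl2 : 2 ≤ l) (hod : Odd l) (h1 : jac l < n) (h2 : n < jac (l + 1)) :
    (solSet n).ncard ∈ ({2, 3, 4} : Set ℕ) := by
  rw [case_e hl2 hod h1 h2, Set.ncard_coe_finset,
    Finset.card_union_of_disjoint disj_FF_FT, card_FF, card_FT]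
  rw [show l + 1 - 2 = l - 1 by omega]
  have hTm : Tm (l - 1) + 1 = jac l := by
    have h := Tm_even (m := l - 1) (Nat.even_iff.mpr (by
      have := Nat.odd_iff.mp hod
      omega))
    rwa [show l - 1 + 1 = l by omega] at h
  have hj : jac (l + 1) + 1 = 2 * jac l := jac_odd hod
  have b1 : 1 ≤ Nc (l - 1) (jac (l + 1) - n) := Nc_pos (by omega)
  have b2 : 1 ≤ Nc (l - 1) (jac (l + 1) + 1 - n) := Nc_pos (by omega)
  have b3 := Nc_le_two (l - 1) (jac (l + 1) - n)
  have b4 := Nc_le_two (l - 1) (jac (l + 1) + 1 - n)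
  simp only [Set.mem_insert_iff, Set.mem_singleton_iff]
  omega

/-- Case (c): `l` even, `jac l + 1 < n < jac (l+1)`. -/
lemma case_c (hl2 : 2 ≤ l) (hev : Even l) (h1 : jac l + 1 < n) (h2 : n < jac (l + 1)) :
    solSet n = ↑(FF l (jac (l + 1) - n) ∪ FT (l + 1) (jac (l + 1) - 1 - n)) := by
  ext ⟨l', S, t⟩
  rw [Finset.coe_union, Set.mem_union, Finset.mem_coe, Finset.mem_coe, mem_FF, mem_FT]
  cases t
  · rw [mem_solSet_false]
    constructor
    · rintro ⟨hS, he⟩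
      rcases pinF hl2 (by omega) (le_of_lt h2) hS he with rfl | ⟨rfl, -, hn, -⟩
      · exact Or.inl ⟨rfl, rfl, hS, by omega⟩
      · omega
    · rintro (⟨rfl, -, hS, hsg⟩ | ⟨-, ht, -⟩)
      · exact ⟨hS, by omega⟩
      · exact absurd ht (by simp)
  · rw [mem_solSet_true]
    constructor
    · rintro ⟨hl'2, hS, hex, he⟩
      rcases pinT hl2 (by omega) (le_of_lt h2) hl'2 hS he with
        ⟨-, -, hn, -⟩ | ⟨rfl, -, -, hsg⟩ | ⟨-, hod, -⟩ | ⟨-, hod, -, -⟩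
      · omega
      · exact Or.inr ⟨rfl, rfl, hS, by omega⟩
      · exact absurd hev (odd_not_even hod)
      · exact absurd hev (odd_not_even hod)
    · rintro (⟨-, ht, -⟩ | ⟨rfl, -, hS, hsg⟩)
      · exact absurd ht (by simp)
      · refine ⟨by omega, hS, ?_,
          Or.inr ⟨Nat.odd_iff.mpr (by have := Nat.even_iff.mp hev; omega), by omega⟩⟩
        rintro ⟨hl3, rfl⟩
        have hle : l = 2 := by omega
        subst hle
        have e1 : jac 2 = 1 := rfl
        have e2 : jac (2 + 1) = 3 := rfl
        omega

lemma ncard_case_c (hl2 : 2 ≤ l) (hev : Even l) (h1 : jac l + 1 < n) (h2 : n < jac (l + 1)) :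
    (solSet n).ncard ∈ ({2, 3, 4} : Set ℕ) := by
  rw [case_c hl2 hev h1 h2, Set.ncard_coe_finset,
    Finset.card_union_of_disjoint disj_FF_FT, card_FF, card_FT]
  rw [show l + 1 - 2 = l - 1 by omega]
  have hTm : Tm (l - 1) = jac l := by
    have h := Tm_odd (m := l - 1) (Nat.odd_iff.mpr (by
      have := Nat.even_iff.mp hev
      omega))
    rwa [show l - 1 + 1 = l by omega] at h
  have hj : jac (l + 1) = 2 * jac l + 1 := jac_even hev
  have b1 : 1 ≤ Nc (l - 1) (jac (l + 1) - n) := Nc_pos (by omega)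
  have b2 : 1 ≤ Nc (l - 1) (jac (l + 1) - 1 - n) := Nc_pos (by omega)
  have b3 := Nc_le_two (l - 1) (jac (l + 1) - n)
  have b4 := Nc_le_two (l - 1) (jac (l + 1) - 1 - n)
  simp only [Set.mem_insert_iff, Set.mem_singleton_iff]
  omega
end CASES
section CASES2
variable {l n : ℕ}

/-- Case (a): `l` even, `n = jac (l+1)`. -/
lemma case_a (hl2 : 2 ≤ l) (hev : Even l) (h1 : jac l < n) (heq : n = jac (l + 1)) :
    solSet n = ↑({(l, (∅ : Finset ℕ), false), (l + 1, Finset.range l, false)} :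
      Finset (ℕ × Finset ℕ × Bool)) := by
  have hTm : Tm l + 1 = jac (l + 1) := Tm_even hev
  have hj : jac (l + 1) = 2 * jac l + 1 := jac_even hev
  have e3 : jac (l + 1 + 1) = jac (l + 1) + 2 * jac l := jac_add_two l
  have hjl : 1 ≤ jac l := jac_pos' (by omega)
  ext ⟨l', S, t⟩
  simp only [Finset.coe_insert, Finset.coe_singleton, Set.mem_insert_iff,
    Set.mem_singleton_iff, Prod.mk.injEq]
  cases t
  · rw [mem_solSet_false]
    constructor
    · rintro ⟨hS, he⟩
      rcases pinF hl2 h1 (le_of_eq heq) hS he with rfl | ⟨rfl, -, -, rfl⟩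
      · have h0 : sg S = 0 := by omega
        exact Or.inl ⟨rfl, sg_eq_zero_iff.mp h0, rfl⟩
      · exact Or.inr ⟨rfl, rfl, rfl⟩
    · rintro (⟨rfl, rfl, -⟩ | ⟨rfl, rfl, -⟩)
      · exact ⟨by simp, by simpa using heq⟩
      · refine ⟨subset_rfl, ?_⟩
        have hr : sg (Finset.range l) = Tm l := rfl
        omega
  · rw [mem_solSet_true]
    constructor
    · rintro ⟨hl'2, hS, hex, he⟩
      rcases pinT hl2 h1 (le_of_eq heq) hl'2 hS he with
        ⟨-, -, hn, -⟩ | ⟨-, -, hlt, -⟩ | ⟨-, hod, -⟩ | ⟨-, hod, -, -⟩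
      · omega
      · omega
      · exact absurd hev (odd_not_even hod)
      · exact absurd hev (odd_not_even hod)
    · rintro (⟨-, -, h⟩ | ⟨-, -, h⟩) <;> exact absurd h (by simp)

lemma ncard_case_a (hl2 : 2 ≤ l) (hev : Even l) (h1 : jac l < n) (heq : n = jac (l + 1)) :
    (solSet n).ncard ∈ ({2, 3, 4} : Set ℕ) := by
  rw [case_a hl2 hev h1 heq, Set.ncard_coe_finset]
  rw [Finset.card_insert_of_notMem, Finset.card_singleton]
  · simp
  · intro h
    rw [Finset.mem_singleton] at h
    have := congrArg Prod.fst h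
    simp at this

/-- Case (b): `l` even, `n = jac l + 1`. -/
lemma case_b (hl2 : 2 ≤ l) (hev : Even l) (heq : n = jac l + 1) :
    solSet n = ↑(insert (l, Finset.range (l - 1), false)
      (insert (l, (∅ : Finset ℕ), true) (FT (l + 1) (jac l - 1)))) := by
  have hj : jac (l + 1) = 2 * jac l + 1 := jac_even hev
  have hjl : 1 ≤ jac l := jac_pos' (by omega)
  have h1 : jac l < n := by omega
  have h2 : n ≤ jac (l + 1) := by omega
  have hTm : Tm (l - 1) = jac l := by
    have h := Tm_odd (m := l - 1) (Nat.odd_iff.mpr (by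
      have := Nat.even_iff.mp hev
      omega))
    rwa [show l - 1 + 1 = l by omega] at h
  ext ⟨l', S, t⟩
  simp only [Finset.coe_insert, Set.mem_insert_iff, Finset.mem_coe, Prod.mk.injEq]
  cases t
  · rw [mem_solSet_false]
    constructor
    · rintro ⟨hS, he⟩
      rcases pinF hl2 h1 h2 hS he with hl' | ⟨-, -, hn, -⟩
      · rw [hl'] at hS he
        have h0 : sg S = Tm (l - 1) := by omega
        exact Or.inl ⟨hl', sg_eq_Tm hS h0, rfl⟩
      · omega
    · rintro (⟨hl', hSe, -⟩ | ⟨-, -, h⟩ | h)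
      · rw [hl', hSe]
        refine ⟨subset_rfl, ?_⟩
        have hr : sg (Finset.range (l - 1)) = Tm (l - 1) := rfl
        omega
      · exact absurd h (by simp)
      · rw [mem_FT] at h
        rcases h with ⟨-, h, -⟩
        exact absurd h (by simp)
  · rw [mem_solSet_true]
    constructor
    · rintro ⟨hl'2, hS, hex, he⟩
      rcases pinT hl2 h1 h2 hl'2 hS he with
        ⟨hl', -, -, rfl⟩ | ⟨hl', -, -, hsg⟩ | ⟨-, hod, -⟩ | ⟨-, hod, -, -⟩
      · exact Or.inr (Or.inl ⟨hl', rfl, rfl⟩)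
      · refine Or.inr (Or.inr ?_)
        rw [mem_FT]
        rw [hl'] at hS
        exact ⟨hl', rfl, hS, by omega⟩
      · exact absurd hev (odd_not_even hod)
      · exact absurd hev (odd_not_even hod)
    · rintro (⟨-, -, h⟩ | ⟨rfl, rfl, -⟩ | h)
      · exact absurd h (by simp)
      · refine ⟨hl2, by simp, ?_,
          Or.inl ⟨hev, by have h0 : sg (∅ : Finset ℕ) = 0 := rfl; omega⟩⟩
        rintro ⟨-, h0⟩
        exact absurd h0.symm (by simp)
      · rw [mem_FT] at h
        rcases h with ⟨rfl, -, hS, hsg⟩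
        refine ⟨by omega, hS, ?_, Or.inr ⟨hev.add_one, by omega⟩⟩
        rintro ⟨h3, rfl⟩
        have hl'' : l = 2 := by omega
        have h01 : sg {0} = 1 := rfl
        rw [hl''] at hsg
        have : jac 2 = 1 := rfl
        omega

lemma ncard_case_b (hl2 : 2 ≤ l) (hev : Even l) (heq : n = jac l + 1) :
    (solSet n).ncard ∈ ({2, 3, 4} : Set ℕ) := by
  have hjl : 1 ≤ jac l := jac_pos' (by omega)
  have hTm : Tm (l - 1) = jac l := by
    have h := Tm_odd (m := l - 1) (Nat.odd_iff.mpr (by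
      have := Nat.even_iff.mp hev
      omega))
    rwa [show l - 1 + 1 = l by omega] at h
  rw [case_b hl2 hev heq, Set.ncard_coe_finset]
  rw [Finset.card_insert_of_notMem, Finset.card_insert_of_notMem]
  · rw [card_FT, show l + 1 - 2 = l - 1 by omega]
    have b1 : 1 ≤ Nc (l - 1) (jac l - 1) := Nc_pos (by omega)
    have b2 := Nc_le_two (l - 1) (jac l - 1)
    simp only [Set.mem_insert_iff, Set.mem_singleton_iff]
    omega
  · intro h
    rw [mem_FT] at h
    rcases h with ⟨h, -⟩
    omega
  · intro h
    rw [Finset.mem_insert] at h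
    rcases h with h | h
    · have := congrArg (fun e => e.2.2) h
      simp at this
    · rw [mem_FT] at h
      rcases h with ⟨-, h, -⟩
      exact absurd h (by simp)

/-- Case (d): `l` odd, `n = jac (l+1)`. -/
lemma case_d (hl2 : 2 ≤ l) (hod : Odd l) (h1 : jac l < n) (heq : n = jac (l + 1)) :
    solSet n = ↑(insert (l, (∅ : Finset ℕ), false)
      (insert (l + 2, Finset.range l, true) (FT (l + 1) 1))) := by
  have hj : jac (l + 1) + 1 = 2 * jac l := jac_odd hod
  have hTm : Tm l = jac (l + 1) := Tm_odd hod
  have e3 : jac (l + 2) = jac (l + 1) + 2 * jac l := jac_add_two l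
  ext ⟨l', S, t⟩
  simp only [Finset.coe_insert, Set.mem_insert_iff, Finset.mem_coe, Prod.mk.injEq]
  cases t
  · rw [mem_solSet_false]
    constructor
    · rintro ⟨hS, he⟩
      rcases pinF hl2 h1 (le_of_eq heq) hS he with rfl | ⟨rfl, hev, -, -⟩
      · have h0 : sg S = 0 := by omega
        exact Or.inl ⟨rfl, sg_eq_zero_iff.mp h0, rfl⟩
      · exact absurd hev (odd_not_even hod)
    · rintro (⟨rfl, rfl, -⟩ | ⟨-, -, h⟩ | h)
      · exact ⟨by simp, by simpa using heq⟩
      · exact absurd h (by simp)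
      · rw [mem_FT] at h
        rcases h with ⟨-, h, -⟩
        exact absurd h (by simp)
  · rw [mem_solSet_true]
    constructor
    · rintro ⟨hl'2, hS, hex, he⟩
      rcases pinT hl2 h1 (le_of_eq heq) hl'2 hS he with
        ⟨-, hev, -, -⟩ | ⟨-, hev, -, -⟩ | ⟨hl', -, hsg⟩ | ⟨hl', -, -, hfull⟩
      · exact absurd hev (odd_not_even hod)
      · exact absurd hev (odd_not_even hod)
      · refine Or.inr (Or.inr ?_)
        rw [mem_FT]
        rw [hl'] at hS
        exact ⟨hl', rfl, hS, by omega⟩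
      · exact Or.inr (Or.inl ⟨hl', hfull, rfl⟩)
    · rintro (⟨-, -, h⟩ | ⟨rfl, rfl, -⟩ | h)
      · exact absurd h (by simp)
      · refine ⟨by omega, subset_rfl, by rintro ⟨h3, -⟩; omega, ?_⟩
        refine Or.inr ⟨?_, ?_⟩
        · obtain ⟨k, hk⟩ := hod
          exact ⟨k + 1, by omega⟩
        · have hr : sg (Finset.range l) = Tm l := rfl
          omega
      · rw [mem_FT] at h
        rcases h with ⟨rfl, -, hS, hsg⟩
        refine ⟨by omega, hS, ?_, Or.inl ⟨hod.add_one, by omega⟩⟩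
        rintro ⟨h3, rfl⟩
        have := Nat.odd_iff.mp hod
        omega

lemma ncard_case_d (hl2 : 2 ≤ l) (hod : Odd l) (h1 : jac l < n) (heq : n = jac (l + 1)) :
    (solSet n).ncard ∈ ({2, 3, 4} : Set ℕ) := by
  have hl3 : 3 ≤ l := by
    have := Nat.odd_iff.mp hod
    omega
  have hj3 : 3 ≤ jac l := by
    have h := jac_mono (a := 3) hl3
    simpa using h
  have hTm : Tm (l - 1) + 1 = jac l := by
    have h := Tm_even (m := l - 1) (Nat.even_iff.mpr (by
      have := Nat.odd_iff.mp hod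
      omega))
    rwa [show l - 1 + 1 = l by omega] at h
  rw [case_d hl2 hod h1 heq, Set.ncard_coe_finset]
  rw [Finset.card_insert_of_notMem, Finset.card_insert_of_notMem]
  · rw [card_FT, show l + 1 - 2 = l - 1 by omega]
    have b1 : 1 ≤ Nc (l - 1) 1 := Nc_pos (by omega)
    have b2 := Nc_le_two (l - 1) 1
    simp only [Set.mem_insert_iff, Set.mem_singleton_iff]
    omega
  · intro h
    rw [mem_FT] at h
    rcases h with ⟨h, -⟩
    omega
  · intro h
    rw [Finset.mem_insert] at h
    rcases h with h | h
    · have := congrArg Prod.fst h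
      simp at this
    · rw [mem_FT] at h
      rcases h with ⟨-, h, -⟩
      exact absurd h (by simp)

/-- Case n = 1. -/
lemma case_one :
    solSet 1 = ↑({((0 : ℕ), (∅ : Finset ℕ), false), (1, (∅ : Finset ℕ), false)} :
      Finset (ℕ × Finset ℕ × Bool)) := by
  ext ⟨l', S, t⟩
  simp only [Finset.coe_insert, Finset.coe_singleton, Set.mem_insert_iff,
    Set.mem_singleton_iff, Prod.mk.injEq]
  cases t
  · rw [mem_solSet_false]
    constructor
    · rintro ⟨hS, he⟩
      have hl'le : l' ≤ 1 := by
        by_contra hgt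
        push_neg at hgt
        obtain ⟨k, rfl⟩ : ∃ k, l' = k + 2 := ⟨l' - 2, by omega⟩
        have hS' : S ⊆ Finset.range (k + 1) := hS
        have hle : sg S ≤ Tm (k + 1) := sg_le hS'
        have htl : Tm (k + 1) ≤ jac (k + 2) := Tm_le (k + 1)
        have e3 : jac (k + 2 + 1) = jac (k + 2) + 2 * jac (k + 1) := jac_add_two (k + 1)
        have hp : 1 ≤ jac (k + 1) := jac_succ_pos k
        omega
      interval_cases l'
      · have h0 : S = ∅ := by simpa using hS
        exact Or.inl ⟨rfl, h0, rfl⟩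
      · have h0 : S = ∅ := by simpa using hS
        exact Or.inr ⟨rfl, h0, rfl⟩
    · rintro (⟨rfl, rfl, -⟩ | ⟨rfl, rfl, -⟩)
      · exact ⟨by simp, rfl⟩
      · exact ⟨by simp, rfl⟩
  · rw [mem_solSet_true]
    constructor
    · rintro ⟨hl'2, hS, hex, he⟩
      exfalso
      obtain ⟨k, rfl⟩ : ∃ k, l' = k + 2 := ⟨l' - 2, by omega⟩
      have hS' : S ⊆ Finset.range k := hS
      have hle : sg S ≤ Tm k := sg_le hS'
      have h2T : 2 * Tm k + 1 = jac (k + 2) := two_Tm k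
      rcases he with ⟨-, h⟩ | ⟨-, h⟩
      · omega
      · -- sg S + 2 = jac (k+2) = 2 Tm k + 1
        have hk1 : Tm k = 1 ∧ sg S = 1 := by omega
        have hkle : k ≤ 1 := by
          by_contra hk
          push_neg at hk
          have h4 : jac 4 ≤ jac (k + 2) := jac_mono (by omega)
          have : jac 4 = 5 := rfl
          omega
        have hk1' : k = 1 := by
          rcases Nat.lt_or_ge k 1 with h' | h'
          · exfalso
            have : k = 0 := by omega
            subst this
            have : Tm 0 = 0 := rfl
            omega
          · omega
        subst hk1'
        have hfull : S = Finset.range 1 := sg_eq_Tm hS' (by omega)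
        rw [Finset.range_one] at hfull
        exact hex ⟨rfl, hfull⟩
    · rintro (⟨-, -, h⟩ | ⟨-, -, h⟩) <;> exact absurd h (by simp)

lemma ncard_case_one : (solSet 1).ncard = 2 := by
  rw [case_one, Set.ncard_coe_finset]
  rw [Finset.card_insert_of_notMem, Finset.card_singleton]
  intro h
  rw [Finset.mem_singleton] at h
  have := congrArg Prod.fst h
  simp at this

lemma exists_bracket (n : ℕ) (h : 2 ≤ n) : ∃ l, 2 ≤ l ∧ jac l < n ∧ n ≤ jac (l + 1) := by
  induction n with
  | zero => omega
  | succ n ih =>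
    rcases Nat.lt_or_ge n 2 with h' | h'
    · have hn1 : n = 1 := by omega
      subst hn1
      refine ⟨2, le_rfl, by norm_num, by norm_num⟩
    · obtain ⟨l, hl2, ha, hb⟩ := ih h'
      rcases Nat.lt_or_ge n (jac (l + 1)) with hc | hc
      · exact ⟨l, hl2, by omega, by omega⟩
      · have hd : jac (l + 1) < jac (l + 1 + 1) := jac_lt_succ (l + 1) (by omega)
        exact ⟨l + 1, by omega, by omega, by omega⟩

end CASES2

/-- For every `n ≥ 1`, the number of standard monomials of degree `n` (i.e. the dimension
of the degree-`n` component of `R`, char `K ≠ 2`) lies in `{2, 3, 4}`. -/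
theorem stmt_19 (n : ℕ) (hn : 1 ≤ n) :
    {e : ℕ × Finset ℕ × Bool |
      isStdMon e.1 e.2.1 e.2.2 ∧ stdDeg e.1 e.2.1 e.2.2 = n}.ncard
      ∈ ({2, 3, 4} : Set ℕ) := by
  show (solSet n).ncard ∈ ({2, 3, 4} : Set ℕ)
  rcases eq_or_lt_of_le hn with h1 | h1
  · rw [← h1, ncard_case_one]
    simp
  · obtain ⟨l, hl2, hjl, hjl1⟩ := exists_bracket n (by omega)
    rcases Nat.even_or_odd l with hev | hod
    · rcases eq_or_lt_of_le hjl1 with heq | hlt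
      · exact ncard_case_a hl2 hev hjl heq
      · rcases eq_or_lt_of_le (by omega : jac l + 1 ≤ n) with heq2 | hlt2
        · exact ncard_case_b hl2 hev heq2.symm
        · exact ncard_case_c hl2 hev hlt2 hlt
    · rcases eq_or_lt_of_le hjl1 with heq | hlt
      · exact ncard_case_d hl2 hod hjl heq
      · exact ncard_case_e hl2 hod hjl hlt
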